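/- A homeomorphism f of a compact metric space X is continuum-wise expansive if and only if f is partially expansive with central dimension D = 0. -/

import Mathlib

open Metric Set

variable {X : Type*} [MetricSpace X]

/-- mesh of a family of sets is < ε -/
def MeshLT (𝒰 : Set (Set X)) (ε : ℝ) : Prop := ∀ A ∈ 𝒰, Metric.diam A < ε

/-- the order of a family of sets is ≤ n : every subfamily with more than n+1
elements has empty intersection -/
def OrdLE (𝒰 : Set (Set X)) (n : ℕ) : Prop :=
  ∀ 𝒱 : Finset (Set X), ↑𝒱 ⊆ 𝒰 → n + 1 < 𝒱.card → ⋂₀ (𝒱 : Set (Set X)) = ∅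

/-- the ε-dimension of Y is ≤ n -/
def DimEpsLE (Y : Set X) (ε : ℝ) (n : ℕ) : Prop :=
  ∃ 𝒰 : Set (Set X), (∀ A ∈ 𝒰, IsOpen A) ∧ Y ⊆ ⋃₀ 𝒰 ∧ MeshLT 𝒰 ε ∧ OrdLE 𝒰 n

/-- the ε-dimension of Y, as an extended natural number -/
noncomputable def dimEps (Y : Set X) (ε : ℝ) : ℕ∞ :=
  sInf {d : ℕ∞ | ∃ n : ℕ, d = n ∧ DimEpsLE Y ε n}

/-- the topological (covering) dimension of Y, as lim_{ε→0} dim_ε Y -/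
noncomputable def topDim (Y : Set X) : ℕ∞ :=
  ⨆ (ε : ℝ) (_ : 0 < ε), dimEps Y ε

/-- dim Y > D, for an integer D ≥ -1 (nonempty sets have dimension ≥ 0 > -1) -/
def DimGT (Y : Set X) (D : ℤ) : Prop := D < 0 ∨ ((D.toNat : ℕ∞) < topDim Y)

/-- the n-th iterate (n ∈ ℤ) of a homeomorphism -/
def hiter (f : X ≃ₜ X) (n : ℤ) : X → X := ⇑(f.toEquiv ^ n)

/-- partially expansive with central dimension D and expansive constant ε -/
def PartiallyExpansive (f : X ≃ₜ X) (D : ℤ) (ε : ℝ) : Prop :=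
  ∀ C : Set X, IsCompact C → C.Nontrivial → DimGT C D →
    ∃ k : ℤ, ε ≤ Metric.diam (hiter f k '' C)
/-- f is continuum-wise expansive with cw-expansive constant δ -/
def CwExpansiveWith {X : Type*} [MetricSpace X] (f : X ≃ₜ X) (δ : ℝ) : Prop :=
  ∀ C : Set X, IsCompact C → IsConnected C →
    (∀ n : ℤ, Metric.diam (hiter f n '' C) < δ) → ∃ x : X, C = {x}

/- ********** auxiliary lemmas ********** -/

lemma hiter_continuous (f : X ≃ₜ X) (n : ℤ) : Continuous (hiter f n) := by
  induction n using Int.induction_on with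
  | zero => simpa [hiter] using continuous_id
  | succ n ih =>
      have h : hiter f ((n : ℤ) + 1) = hiter f n ∘ f := by
        funext x
        simp [hiter, zpow_add_one, Equiv.Perm.mul_apply]
      rw [h]; exact ih.comp f.continuous
  | pred n ih =>
      have h : hiter f (-(n : ℤ) - 1) = hiter f (-n) ∘ f.symm := by
        funext x
        simp [hiter, zpow_sub_one, Equiv.Perm.mul_apply, Equiv.Perm.inv_def]
      rw [h]; exact ih.comp f.symm.continuous

/-- compact totally disconnected sets have ε-dimension 0 for every ε > 0 -/
lemma dimEpsLE_zero_of_totallyDisconnected [CompactSpace X] {C : Set X}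
    (hC : IsCompact C) (htd : IsTotallyDisconnected C) {ε : ℝ} (hε : 0 < ε) :
    DimEpsLE C ε 0 := by
  classical
  rcases C.eq_empty_or_nonempty with rfl | ⟨z0, hz0⟩
  · refine ⟨∅, by simp, by simp, by simp [MeshLT], ?_⟩
    intro 𝒱 hsub hcard
    have : 𝒱 = ∅ := Finset.coe_eq_empty.mp (Set.subset_empty_iff.mp hsub)
    subst this; simp at hcard
  haveI : CompactSpace ↥C := isCompact_iff_compactSpace.mp hC
  haveI : TotallyDisconnectedSpace ↥C := totallyDisconnectedSpace_subtype_iff.mpr htd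
  -- clopen small neighborhoods in the subtype
  have hcl : ∀ x : ↥C, ∃ V : Set ↥C, IsClopen V ∧ x ∈ V ∧
      V ⊆ (Subtype.val : ↥C → X) ⁻¹' ball (x : X) (ε / 5) := by
    intro x
    refine compact_exists_isClopen_in_isOpen
      (isOpen_ball.preimage continuous_subtype_val) ?_
    simp only [mem_preimage, mem_ball, dist_self]
    positivity
  choose V hVclopen hVmem hVsub using hcl
  obtain ⟨s, hs⟩ := isCompact_univ.elim_finite_subcover V (fun x => (hVclopen x).2)
      (fun x _ => mem_iUnion.mpr ⟨x, hVmem x⟩)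
  set l := s.toList with hl
  set n := l.length with hn
  have hnpos : 0 < n := by
    rcases mem_iUnion₂.mp (hs (mem_univ ⟨z0, hz0⟩)) with ⟨x, hxs, -⟩
    have : x ∈ l := by rwa [hl, Finset.mem_toList]
    exact List.length_pos_iff.mpr (fun h => by simp [h] at this)
  haveI : Nonempty (Fin n) := ⟨⟨0, hnpos⟩⟩
  set g : Fin n → Set ↥C := fun i => V (l.get i) with hg
  have hgclopen : ∀ i, IsClopen (g i) := fun i => hVclopen _
  have hcoverg : ∀ y : ↥C, ∃ i, y ∈ g i := by
    intro y
    rcases mem_iUnion₂.mp (hs (mem_univ y)) with ⟨x, hxs, hyx⟩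
    have hxl : x ∈ l := by rwa [hl, Finset.mem_toList]
    obtain ⟨i, hi⟩ := List.mem_iff_get.mp hxl
    refine ⟨i, ?_⟩
    show y ∈ V (l.get i)
    rw [hi]; exact hyx
  -- disjointify
  set W : Fin n → Set ↥C := fun i => g i \ ⋃ j ∈ {j : Fin n | j < i}, g j with hW
  have hWclopen : ∀ i, IsClopen (W i) := by
    intro i
    exact (hgclopen i).diff ((Set.toFinite _).isClopen_biUnion (fun j _ => hgclopen j))
  have hWsub : ∀ i, W i ⊆ g i := fun i => diff_subset
  have hWdisj : ∀ i j : Fin n, i ≠ j → Disjoint (W i) (W j) := by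
    intro i j hij
    rcases lt_or_gt_of_ne hij with h | h
    · rw [Set.disjoint_left]
      intro a hai haj
      exact haj.2 (mem_biUnion h hai.1)
    · rw [Set.disjoint_left]
      intro a hai haj
      exact hai.2 (mem_biUnion h haj.1)
  have hWcover : ∀ y : ↥C, ∃ i, y ∈ W i := by
    intro y
    have hT : (Finset.univ.filter (fun i => y ∈ g i)).Nonempty := by
      obtain ⟨i, hi⟩ := hcoverg y
      exact ⟨i, Finset.mem_filter.mpr ⟨Finset.mem_univ _, hi⟩⟩
    set i0 := (Finset.univ.filter (fun i => y ∈ g i)).min' hT with hi0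
    refine ⟨i0, (Finset.mem_filter.mp ((Finset.univ.filter _).min'_mem hT)).2, ?_⟩
    intro hmem
    obtain ⟨j, hji, hyj⟩ := mem_iUnion₂.mp hmem
    exact absurd ((Finset.univ.filter (fun i => y ∈ g i)).min'_le j
      (Finset.mem_filter.mpr ⟨Finset.mem_univ _, hyj⟩)) (not_le.mpr hji)
  -- push to X
  set K : Fin n → Set X := fun i => Subtype.val '' W i with hK
  have hKcomp : ∀ i, IsCompact (K i) :=
    fun i => ((hWclopen i).1.isCompact).image continuous_subtype_val
  have hKball : ∀ i, K i ⊆ ball ((l.get i : ↥C) : X) (ε / 5) := by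
    rintro i _ ⟨y, hy, rfl⟩
    exact hVsub _ (hWsub i hy)
  have hKdiam : ∀ i, diam (K i) ≤ 2 * (ε / 5) := fun i =>
    le_trans (diam_mono (hKball i) isBounded_ball) (diam_ball (by positivity))
  have hKdisj : ∀ i j : Fin n, i ≠ j → Disjoint (K i) (K j) := fun i j hij =>
    Set.disjoint_image_of_injective Subtype.val_injective (hWdisj i j hij)
  have hKcover : C ⊆ ⋃ i, K i := by
    intro y hy
    obtain ⟨i, hi⟩ := hWcover ⟨y, hy⟩
    exact mem_iUnion.mpr ⟨i, ⟨⟨y, hy⟩, hi, rfl⟩⟩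
  -- thickenings
  have key : ∀ i j : Fin n, ∃ d, 0 < d ∧
      (i ≠ j → Disjoint (thickening d (K i)) (thickening d (K j))) := by
    intro i j
    by_cases h : i = j
    · exact ⟨1, one_pos, fun hne => absurd h hne⟩
    · obtain ⟨d, hd, hdis⟩ := (hKdisj i j h).exists_thickenings (hKcomp i) (hKcomp j).isClosed
      exact ⟨d, hd, fun _ => hdis⟩
  choose d hd0 hddis using key
  have hune : (Finset.univ : Finset (Fin n × Fin n)).Nonempty := Finset.univ_nonempty
  set t : ℝ := min (ε / 5) (Finset.univ.inf' hune fun p : Fin n × Fin n => d p.1 p.2) with ht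
  have ht0 : 0 < t := lt_min (by positivity)
    ((Finset.lt_inf'_iff _).mpr fun p _ => hd0 p.1 p.2)
  have htle : ∀ i j : Fin n, t ≤ d i j := fun i j =>
    le_trans (min_le_right _ _) (Finset.inf'_le _ (Finset.mem_univ (i, j)))
  set U : Fin n → Set X := fun i => thickening t (K i) with hU
  refine ⟨Set.range U, ?_, ?_, ?_, ?_⟩
  · rintro A ⟨i, rfl⟩; exact isOpen_thickening
  · intro y hy
    obtain ⟨i, hi⟩ := mem_iUnion.mp (hKcover hy)
    exact ⟨U i, ⟨i, rfl⟩, self_subset_thickening ht0 _ hi⟩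
  · rintro A ⟨i, rfl⟩
    have h1 : diam (U i) ≤ diam (K i) + 2 * t := diam_thickening_le _ ht0.le
    have h2 : t ≤ ε / 5 := min_le_left _ _
    have := hKdiam i
    calc diam (U i) ≤ diam (K i) + 2 * t := h1
      _ ≤ 2 * (ε / 5) + 2 * (ε / 5) := by linarith
      _ < ε := by linarith
  · intro 𝒱 hsub hcard
    have hc1 : 1 < 𝒱.card := by omega
    obtain ⟨A, hA, B, hB, hAB⟩ := Finset.one_lt_card.mp hc1
    obtain ⟨i, rfl⟩ := hsub hA
    obtain ⟨j, rfl⟩ := hsub hB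
    have hij : i ≠ j := fun h => hAB (by rw [h])
    have hdis : Disjoint (U i) (U j) :=
      (hddis i j hij).mono (thickening_mono (htle i j) _) (thickening_mono (htle i j) _)
    refine eq_empty_of_subset_empty fun x hx => ?_
    have hxi : x ∈ U i := hx _ hA
    have hxj : x ∈ U j := hx _ hB
    exact Set.disjoint_left.mp hdis hxi hxj

/-- A homeomorphism of a compact metric space is cw-expansive iff it is partially
expansive with central dimension D = 0. -/
theorem cwExpansive_iff_partiallyExpansive_zero {X : Type*} [MetricSpace X]
    [CompactSpace X] (f : X ≃ₜ X) :
    (∃ δ : ℝ, 0 < δ ∧ CwExpansiveWith f δ) ↔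
      (∃ ε : ℝ, 0 < ε ∧ PartiallyExpansive f 0 ε) := by
  classical
  have bounded : ∀ s : Set X, Bornology.IsBounded s :=
    fun s => isCompact_univ.isBounded.subset (subset_univ s)
  constructor
  · rintro ⟨δ, hδ, hcw⟩
    refine ⟨δ, hδ, ?_⟩
    intro C hCc hCnt hdim
    by_contra hcon
    push_neg at hcon
    -- every connected subset of C is a singleton
    have htd : IsTotallyDisconnected C := by
      intro tset hts hpre
      rcases tset.eq_empty_or_nonempty with rfl | hne
      · exact subsingleton_empty
      have hdiam : ∀ m : ℤ, diam (hiter f m '' closure tset) < δ := by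
        intro m
        calc diam (hiter f m '' closure tset)
            ≤ diam (closure (hiter f m '' tset)) :=
              diam_mono (image_closure_subset_closure_image (hiter_continuous f m))
                (bounded _)
          _ = diam (hiter f m '' tset) := diam_closure _
          _ ≤ diam (hiter f m '' C) := diam_mono (image_mono hts) (bounded _)
          _ < δ := hcon m
      obtain ⟨x, hx⟩ := hcw (closure tset) isClosed_closure.isCompact
        ⟨hne.closure, hpre.closure⟩ hdiam
      intro a ha b hb
      have ha' : a ∈ ({x} : Set X) := hx ▸ subset_closure ha
      have hb' : b ∈ ({x} : Set X) := hx ▸ subset_closure hb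
      rw [mem_singleton_iff] at ha' hb'
      rw [ha', hb']
    have hle : topDim C ≤ 0 := by
      refine iSup₂_le fun ε hεpos => ?_
      have hmem : (0 : ℕ∞) ∈ {d : ℕ∞ | ∃ m : ℕ, d = m ∧ DimEpsLE C ε m} :=
        ⟨0, by norm_num, dimEpsLE_zero_of_totallyDisconnected hCc htd hεpos⟩
      simpa [dimEps] using sInf_le hmem
    rcases hdim with hd | hd
    · exact absurd hd (by norm_num)
    · have hd' : (0 : ℕ∞) < topDim C := by simpa using hd
      exact absurd (lt_of_lt_of_le hd' hle) (lt_irrefl _)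
  · rintro ⟨ε, hε, hpe⟩
    refine ⟨ε, hε, ?_⟩
    intro C hCc hCconn hsmall
    by_cases hnt : C.Nontrivial
    · exfalso
      have hdim : DimGT C 0 := by
        right
        obtain ⟨x, hx, y, hy, hxy⟩ := hnt
        have hr : 0 < dist x y := dist_pos.mpr hxy
        have h1 : ∀ dd ∈ {dd : ℕ∞ | ∃ m : ℕ, dd = m ∧ DimEpsLE C (dist x y) m},
            1 ≤ dd := by
          rintro dd ⟨m, rfl, 𝒰, hopen, hcov, hmesh, hord⟩
          by_contra hlt
          have hm : m = 0 := by
            by_contra hm0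
            exact hlt (by exact_mod_cast Nat.one_le_iff_ne_zero.mpr hm0)
          subst hm
          obtain ⟨A, hA, hxA⟩ := hcov hx
          -- A is disjoint from every other member of 𝒰
          have hdisj : ∀ B ∈ 𝒰, B ≠ A → A ∩ B = ∅ := by
            intro B hB hne
            have hcard : (0 : ℕ) + 1 < ({A, B} : Finset (Set X)).card := by
              rw [Finset.card_pair (fun h => hne (h.symm))]
              norm_num
            have := hord {A, B} (by
              intro S hS
              simp only [Finset.coe_insert, Finset.coe_singleton, mem_insert_iff,
                mem_singleton_iff] at hS
              rcases hS with rfl | rfl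
              exacts [hA, hB]) hcard
            simpa using this
          have hCA : C ⊆ A := by
            by_contra hnsub
            obtain ⟨z, hzC, hzA⟩ := not_subset.mp hnsub
            obtain ⟨B, hB, hzB⟩ := hcov hzC
            have hBA : B ≠ A := fun h => hzA (h ▸ hzB)
            have hVopen : IsOpen (⋃₀ (𝒰 \ {A})) :=
              isOpen_sUnion fun S hS => hopen S hS.1
            have hsubUV : C ⊆ A ∪ ⋃₀ (𝒰 \ {A}) := by
              intro w hw
              obtain ⟨S, hS, hwS⟩ := hcov hw
              by_cases hSA : S = A
              · exact Or.inl (hSA ▸ hwS)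
              · exact Or.inr ⟨S, ⟨hS, hSA⟩, hwS⟩
            obtain ⟨w, hwC, hwA, hwV⟩ := hCconn.isPreconnected A (⋃₀ (𝒰 \ {A}))
              (hopen A hA) hVopen hsubUV ⟨x, hx, hxA⟩ ⟨z, hzC, ⟨B, ⟨hB, hBA⟩, hzB⟩⟩
            obtain ⟨S, ⟨hS, hSA⟩, hwS⟩ := hwV
            have hAS := hdisj S hS hSA
            have : w ∈ A ∩ S := ⟨hwA, hwS⟩
            rw [hAS] at this
            exact this
          have hxy' : dist x y ≤ diam A :=
            dist_le_diam_of_mem (bounded A) (hCA hx) (hCA hy)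
          exact absurd (lt_of_le_of_lt hxy' (hmesh A hA)) (lt_irrefl _)
        have h2 : (1 : ℕ∞) ≤ dimEps C (dist x y) := le_sInf h1
        have h3 : dimEps C (dist x y) ≤ topDim C :=
          le_iSup₂ (f := fun (ε : ℝ) (_ : 0 < ε) => dimEps C ε) (dist x y) hr
        have : (0 : ℕ∞) < topDim C := lt_of_lt_of_le zero_lt_one (le_trans h2 h3)
        simpa using this
      obtain ⟨k, hk⟩ := hpe C hCc hnt hdim
      exact absurd (lt_of_le_of_lt hk (hsmall k)) (lt_irrefl _)
    · obtain ⟨x, hx⟩ := hCconn.nonempty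
      exact ⟨x, (Set.not_nontrivial_iff.mp hnt).eq_singleton_of_mem hx⟩
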